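/- Let 𝔇 be a nonempty symmetric set of tournaments on X, each of which is balanced. Then for all distinct x, y, z ∈ X the weighted tournament t^{⟨x,y,z⟩} belongs to pr-cl(𝔇). -/

import Mathlib

open scoped BigOperators

variable {X : Type*}

/-- A tournament on `X`: irreflexive and, on distinct points, exactly one direction holds. -/
def IsTournament (R : X → X → Prop) : Prop :=
  (∀ x, ¬ R x x) ∧ ∀ x y : X, x ≠ y → (R x y ↔ ¬ R y x)

/-- Out-degree of `x` in the relation `R`. -/
noncomputable def valT (R : X → X → Prop) (x : X) : ℕ :=
  Set.ncard {y | R x y}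

/-- A tournament is balanced if every out-degree equals `(n-1)/2`. -/
def IsBalanced [Fintype X] (R : X → X → Prop) : Prop :=
  ∀ x : X, (valT R x : ℝ) = ((Fintype.card X : ℝ) - 1) / 2

/-- Action of a permutation on a relation. -/
def permAct (π : Equiv.Perm X) (R : X → X → Prop) : X → X → Prop :=
  fun x y => R (π.symm x) (π.symm y)

/-- A set of relations closed under the permutation action. -/
def SymmetricSet (D : Set (X → X → Prop)) : Prop :=
  ∀ (π : Equiv.Perm X), ∀ R ∈ D, permAct π R ∈ D

/-- The majority closure of a set of tournaments. -/
def majCl [Fintype X] (D : Set (X → X → Prop)) : Set (X → X → Prop) :=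
  {d | IsTournament d ∧ ∃ w : (X → X → Prop) → ℝ,
    (∀ c, 0 ≤ w c ∧ w c ≤ 1) ∧
    (∀ c, w c ≠ 0 → c ∈ D) ∧
    (Function.support w).Finite ∧
    (∑ᶠ c, w c) = 1 ∧
    ∀ x y : X, x ≠ y →
      (d x y ↔ 1 / 2 < ∑ᶠ c ∈ {c : X → X → Prop | c ∈ D ∧ c x y}, w c)}

open Classical in
noncomputable def tOf (d : X → X → Prop) : X → X → ℝ :=
  fun x y => if d x y then 1 else 0

/-- pr-cl: the convex hull of `{t[d] : d ∈ D}`. -/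
noncomputable def prCl (D : Set (X → X → Prop)) : Set (X → X → ℝ) :=
  convexHull ℝ (tOf '' D)

/-- `t` is a weighted tournament. -/
def IsWeighted (t : X → X → ℝ) : Prop :=
  ∀ x y : X, x ≠ y → 0 ≤ t x y ∧ t x y ≤ 1 ∧ t y x = 1 - t x y

/-- A weighted tournament is balanced if each row sums to `(n-1)/2`. -/
def BalancedW [Fintype X] (t : X → X → ℝ) : Prop :=
  ∀ x : X, (∑ᶠ y ∈ {y : X | y ≠ x}, t x y) = ((Fintype.card X : ℝ) - 1) / 2

/-- A tournament is pseudo-balanced if it is dominated by a balanced weighted tournament. -/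
def PseudoBalanced [Fintype X] (c : X → X → Prop) : Prop :=
  ∃ t : X → X → ℝ, IsWeighted t ∧ BalancedW t ∧
    ∀ x y : X, x ≠ y → c x y → 1 / 2 < t x y

open Classical in
noncomputable def tConfig (x y : X) (a s0 s1 : ℝ) : X → X → ℝ :=
  fun u v =>
    if u = v then 0
    else if u = x ∧ v = y then a
    else if u = y ∧ v = x then 1 - a
    else if u = x then s0
    else if v = x then 1 - s0
    else if u = y then s1
    else if v = y then 1 - s1
    else 1 / 2

/-- `Prd_ℓ(𝒟)`. -/
noncomputable def PrdL [Fintype X] (l : ℕ) (D : Set (X → X → Prop)) : Set (ℝ × ℝ) :=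
  {p | ∃ c ∈ D, ∃ x y : X, x ≠ y ∧ (c x y ↔ l = 1) ∧
    p.1 = (Set.ncard {z : X | z ≠ x ∧ z ≠ y ∧ c x z} : ℝ) / ((Fintype.card X : ℝ) - 2) ∧
    p.2 = (Set.ncard {z : X | z ≠ x ∧ z ≠ y ∧ c y z} : ℝ) / ((Fintype.card X : ℝ) - 2)}

/-- `Pr_A(𝒟)`. -/
noncomputable def PrA [Fintype X] (A : Set ℝ) (D : Set (X → X → Prop)) : Set (ℝ × ℝ) :=
  {p | 0 ≤ p.1 ∧ p.1 ≤ 1 ∧ 0 ≤ p.2 ∧ p.2 ≤ 1 ∧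
    ∃ x y : X, x ≠ y ∧ ∃ a ∈ A, tConfig x y a p.1 p.2 ∈ prCl D}

/-- `V_ℓ(d)` as a subset of `ℝ²`. -/
noncomputable def Vset [Fintype X] (l : ℕ) (d : X → X → Prop) : Set (ℝ × ℝ) :=
  {p | ∃ x y : X, x ≠ y ∧ (if l = 1 then d x y else d y x) ∧
    p = ((valT d x : ℝ), (valT d y : ℝ))}

/-- `V*_ℓ(d)`. -/
noncomputable def VstarSet [Fintype X] (l : ℕ) (d : X → X → Prop) : Set (ℝ × ℝ) :=
  {p | ∃ q ∈ Vset l d, p = (q.1 - (l : ℝ), q.2 - (1 - (l : ℝ)))}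

open Classical in
noncomputable def tCycle (k : ℕ) (xs : ℕ → X) (a : ℝ) : X → X → ℝ :=
  fun u v =>
    if u = v then 0
    else if ∃ i < k, u = xs i ∧ v = xs ((i + 1) % k) then a
    else if ∃ i < k, v = xs i ∧ u = xs ((i + 1) % k) then 1 - a
    else 1 / 2

open Classical in
noncomputable def tTriple (x y z : X) : X → X → ℝ :=
  fun u v =>
    if u = v then 0
    else if (u, v) = (x, y) ∨ (u, v) = (y, z) ∨ (u, v) = (z, x) then 1
    else if (u, v) = (y, x) ∨ (u, v) = (z, y) ∨ (u, v) = (x, z) then 0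
    else 1 / 2

/-- The dual (reverse) tournament. -/
def dualT (c : X → X → Prop) : X → X → Prop := fun x y => c y x

/-- The symmetric closure (orbit) of a single tournament. -/
def symCl (c : X → X → Prop) : Set (X → X → Prop) :=
  {d | ∃ π : Equiv.Perm X, d = permAct π c}

section
variable {X : Type*}

lemma exists_perm_three [DecidableEq X] {a b c' x y z : X} (hab : a ≠ b) (hac : a ≠ c') (hbc : b ≠ c')
    (hxy : x ≠ y) (hxz : x ≠ z) (hyz : y ≠ z) :
    ∃ π : Equiv.Perm X, π a = x ∧ π b = y ∧ π c' = z := by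
  set σ1 := Equiv.swap a x with hσ1
  set σ2 := Equiv.swap (σ1 b) y with hσ2
  set σ3 := Equiv.swap (σ2 (σ1 c')) z with hσ3
  have hinj : Function.Injective (fun w => σ2 (σ1 w)) := fun _ _ h => σ1.injective (σ2.injective h)
  have h1a : σ1 a = x := Equiv.swap_apply_left a x
  have h2x : σ2 x = x := by
    apply Equiv.swap_apply_of_ne_of_ne
    · rw [← h1a]; exact fun h => hab (σ1.injective h.symm).symm
    · exact hxy
  have h2a : σ2 (σ1 a) = x := by rw [h1a, h2x]
  have h2b : σ2 (σ1 b) = y := Equiv.swap_apply_left _ _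
  have h3x : σ3 x = x := by
    apply Equiv.swap_apply_of_ne_of_ne
    · rw [← h2a]; exact fun h => hac (hinj h.symm).symm
    · exact hxz
  have h3y : σ3 y = y := by
    apply Equiv.swap_apply_of_ne_of_ne
    · rw [← h2b]; exact fun h => hbc (hinj h.symm).symm
    · exact hyz
  refine ⟨(σ3 * σ2) * σ1, ?_, ?_, ?_⟩
  · simp only [Equiv.Perm.mul_apply, h1a, h2x, h3x]
  · simp only [Equiv.Perm.mul_apply, h2b, h3y]
  · simp only [Equiv.Perm.mul_apply]
    exact Equiv.swap_apply_left _ _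
end

section
variable {X : Type*}

lemma exists_threeCycle [Fintype X] (hcard : 3 ≤ Fintype.card X)
    (c : X → X → Prop) (hT : IsTournament c) (hbal : IsBalanced c) :
    ∃ a b c', c a b ∧ c b c' ∧ c c' a := by
  classical
  obtain ⟨hirr, hdich⟩ := hT
  set n : ℕ := Fintype.card X with hn
  have hn3 : (3:ℝ) ≤ (n:ℝ) := by exact_mod_cast hcard
  have hhalf : (1:ℝ) ≤ ((n:ℝ) - 1) / 2 := by linarith
  obtain ⟨a⟩ : Nonempty X := Fintype.card_pos_iff.mp (by omega)
  set S : Set X := {w | c a w} with hS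
  set T : Set X := {w | c w a} with hTd
  have hSfin : S.Finite := Set.toFinite _
  have hSncard : (S.ncard : ℝ) = ((n:ℝ) - 1) / 2 := hbal a
  have hSne : S.Nonempty := by
    rw [← Set.ncard_pos hSfin]
    rcases Nat.eq_zero_or_pos S.ncard with h0 | h
    · exfalso; rw [h0] at hSncard; push_cast at hSncard; linarith
    · exact h
  have hTne : T.Nonempty := by
    by_contra h
    rw [Set.not_nonempty_iff_eq_empty] at h
    have hSeq : S = ({a} : Set X)ᶜ := by
      ext w
      simp only [hS, Set.mem_setOf_eq, Set.mem_compl_iff, Set.mem_singleton_iff]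
      constructor
      · intro hw hwa; exact hirr a (hwa ▸ hw)
      · intro hw
        have h1 := hdich w a hw
        have h2 : ¬ c w a := fun hc => (h ▸ (hc : w ∈ T) : w ∈ (∅ : Set X))
        tauto
    have hcompl : ({a} : Set X).ncard + (({a}: Set X)ᶜ).ncard = Nat.card X :=
      Set.ncard_add_ncard_compl _
    rw [Set.ncard_singleton, Nat.card_eq_fintype_card, ← hn, ← hSeq] at hcompl
    have : (1:ℝ) + ((n:ℝ)-1)/2 = (n:ℝ) := by
      rw [← hSncard]; exact_mod_cast congrArg (Nat.cast : ℕ → ℝ) hcompl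
    linarith
  by_cases hST : ∃ s ∈ S, ∃ t ∈ T, c s t
  · obtain ⟨s, hs, t, ht, hst⟩ := hST
    exact ⟨a, s, t, hs, hst, ht⟩
  · exfalso
    push_neg at hST
    obtain ⟨t, ht⟩ := hTne
    have hsub : insert a S ⊆ {w | c t w} := by
      intro w hw
      rcases hw with rfl | hw
      · exact ht
      · have hwS : c a w := hw
        have hne : w ≠ t := by
          rintro rfl
          have haw : a ≠ w := fun h' => hirr a (h' ▸ hwS)
          exact (hdich a w haw).mp hwS ht
        have h1 : ¬ c w t := hST w hw t ht
        have h2 := hdich w t hne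
        tauto
    have haS : a ∉ S := hirr a
    have hle : S.ncard + 1 ≤ {w | c t w}.ncard := by
      rw [← Set.ncard_insert_of_notMem haS hSfin]
      exact Set.ncard_le_ncard hsub (Set.toFinite _)
    have hvt : ({w | c t w}.ncard : ℝ) = ((n:ℝ) - 1) / 2 := hbal t
    have : (S.ncard : ℝ) + 1 ≤ ({w | c t w}.ncard : ℝ) := by exact_mod_cast hle
    linarith
end

theorem stmt15 [Fintype X] (hcard : 3 ≤ Fintype.card X)
    (D : Set (X → X → Prop)) (hne : D.Nonempty) (hT : ∀ c ∈ D, IsTournament c)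
    (hsym : SymmetricSet D) (hbal : ∀ c ∈ D, IsBalanced c)
    (x y z : X) (hxy : x ≠ y) (hyz : y ≠ z) (hxz : x ≠ z) :
    tTriple x y z ∈ prCl D := by
  classical
  obtain ⟨c, hcD⟩ := hne
  obtain ⟨a, b, c', hab, hbc, hca⟩ := exists_threeCycle hcard c (hT c hcD) (hbal c hcD)
  obtain ⟨hirr, hdich⟩ := hT c hcD
  have hbalc := hbal c hcD
  set n : ℕ := Fintype.card X with hn
  have hn3 : (3:ℝ) ≤ (n:ℝ) := by exact_mod_cast hcard
  -- distinctness and reverse edges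
  have hab' : a ≠ b := fun h => hirr a (h ▸ hab)
  have hbc' : b ≠ c' := fun h => hirr b (h ▸ hbc)
  have hca' : c' ≠ a := fun h => hirr c' (h ▸ hca)
  have hnba : ¬ c b a := (hdich a b hab').mp hab
  have hncb : ¬ c c' b := (hdich b c' hbc').mp hbc
  have hnac : ¬ c a c' := (hdich c' a hca').mp hca
  -- tOf facts
  have htOf1 : ∀ (d : X → X → Prop) (u v : X), d u v → tOf d u v = 1 := by
    intro d u v h; simp [tOf, h]
  have htOf0 : ∀ (d : X → X → Prop) (u v : X), ¬ d u v → tOf d u v = 0 := by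
    intro d u v h; simp [tOf, h]
  have htOfpair : ∀ (u v : X), u ≠ v → tOf c u v + tOf c v u = 1 := by
    intro u v huv
    by_cases h : c u v
    · rw [htOf1 c u v h, htOf0 c v u (fun h' => ((hdich v u (Ne.symm huv)).mp h') h)]; ring
    · have h' : c v u := by have := hdich u v huv; tauto
      rw [htOf0 c u v h, htOf1 c v u h']; ring
  -- the permutation finset
  set P : Finset (Equiv.Perm X) :=
    Finset.univ.filter (fun π => π a = x ∧ π b = y ∧ π c' = z) with hP
  have hmem : ∀ π ∈ P, π a = x ∧ π b = y ∧ π c' = z := by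
    intro π hπ; exact (Finset.mem_filter.mp hπ).2
  have hmem' : ∀ π : Equiv.Perm X, (π a = x ∧ π b = y ∧ π c' = z) → π ∈ P := by
    intro π h; simp only [hP, Finset.mem_filter, Finset.mem_univ, true_and]; exact h
  obtain ⟨π₀, hπ₀⟩ := exists_perm_three hab' (Ne.symm hca') hbc' hxy hxz hyz
  have hPne : P.Nonempty := ⟨π₀, hmem' π₀ hπ₀⟩
  have hPpos : (0:ℝ) < (P.card : ℝ) := by exact_mod_cast Finset.card_pos.mpr hPne
  have hsymx : ∀ π ∈ P, π.symm x = a := by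
    intro π hπ; rw [Equiv.symm_apply_eq]; exact ((hmem π hπ).1).symm
  have hsymy : ∀ π ∈ P, π.symm y = b := by
    intro π hπ; rw [Equiv.symm_apply_eq]; exact ((hmem π hπ).2.1).symm
  have hsymz : ∀ π ∈ P, π.symm z = c' := by
    intro π hπ; rw [Equiv.symm_apply_eq]; exact ((hmem π hπ).2.2).symm
  -- Out predicate
  set Out : X → Prop := fun w => w ≠ x ∧ w ≠ y ∧ w ≠ z with hOut
  have hOutne : ∀ (p : X), Out p → ∀ π ∈ P, π.symm p ≠ a ∧ π.symm p ≠ b ∧ π.symm p ≠ c' := by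
    intro p hp π hπ
    refine ⟨fun h => hp.1 ?_, fun h => hp.2.1 ?_, fun h => hp.2.2 ?_⟩
    · rw [← (hmem π hπ).1, ← h, Equiv.apply_symm_apply]
    · rw [← (hmem π hπ).2.1, ← h, Equiv.apply_symm_apply]
    · rw [← (hmem π hπ).2.2, ← h, Equiv.apply_symm_apply]
  -- multiplication by swap lemmas
  have mulsymm : ∀ (π : Equiv.Perm X) (p q w : X),
      (π * Equiv.swap p q).symm w = Equiv.swap p q (π.symm w) := by
    intro π p q w
    rw [Equiv.symm_apply_eq, Equiv.Perm.mul_apply, Equiv.swap_apply_self, Equiv.apply_symm_apply]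
  have hswapmem : ∀ π ∈ P, ∀ p q : X, Out p → Out q →
      π * Equiv.swap (π.symm p) (π.symm q) ∈ P := by
    intro π hπ p q hp hq
    obtain ⟨hpa, hpb, hpc⟩ := hOutne p hp π hπ
    obtain ⟨hqa, hqb, hqc⟩ := hOutne q hq π hπ
    apply hmem'
    refine ⟨?_, ?_, ?_⟩ <;> rw [Equiv.Perm.mul_apply, Equiv.swap_apply_of_ne_of_ne]
    · exact (hmem π hπ).1
    · exact fun h => hpa h.symm
    · exact fun h => hqa h.symm
    · exact (hmem π hπ).2.1
    · exact fun h => hpb h.symm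
    · exact fun h => hqb h.symm
    · exact (hmem π hπ).2.2
    · exact fun h => hpc h.symm
    · exact fun h => hqc h.symm
  -- the sums
  set S : X → X → ℝ := fun u v => ∑ π ∈ P, tOf (permAct π c) u v with hSdef
  have hterm : ∀ (π : Equiv.Perm X) (u v : X), tOf (permAct π c) u v = tOf c (π.symm u) (π.symm v) := by
    intro π u v; rfl
  -- constant cases
  have hSconst : ∀ (u v p q : X), (∀ π ∈ P, π.symm u = p) → (∀ π ∈ P, π.symm v = q) →
      S u v = (P.card : ℝ) * tOf c p q := by
    intro u v p q hu hv
    simp only [hSdef]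
    rw [Finset.sum_congr rfl (fun π hπ => by rw [hterm, hu π hπ, hv π hπ])]
    rw [Finset.sum_const, nsmul_eq_mul]
  -- pairing
  have hpair : ∀ (u v : X), u ≠ v → S u v + S v u = (P.card : ℝ) := by
    intro u v huv
    simp only [hSdef]
    rw [← Finset.sum_add_distrib]
    rw [Finset.sum_congr rfl (fun π hπ => ?_), Finset.sum_const, nsmul_eq_mul, mul_one]
    rw [hterm, hterm]
    exact htOfpair _ _ (fun h => huv (π.symm.injective h))
  -- both outside : symmetric
  have hBB : ∀ (u v : X), Out u → Out v → S u v = S v u := by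
    intro u v hu hv
    simp only [hSdef]
    refine Finset.sum_nbij' (fun π => π * Equiv.swap (π.symm u) (π.symm v))
      (fun π => π * Equiv.swap (π.symm u) (π.symm v)) ?_ ?_ ?_ ?_ ?_
    · intro π hπ; exact hswapmem π hπ u v hu hv
    · intro π hπ; exact hswapmem π hπ u v hu hv
    · intro π hπ
      rw [mulsymm, mulsymm, Equiv.swap_apply_left, Equiv.swap_apply_right,
        Equiv.swap_comm ((Equiv.symm π) v) ((Equiv.symm π) u),
        Equiv.mul_swap_mul_self]
    · intro π hπ
      rw [mulsymm, mulsymm, Equiv.swap_apply_left, Equiv.swap_apply_right,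
        Equiv.swap_comm ((Equiv.symm π) v) ((Equiv.symm π) u),
        Equiv.mul_swap_mul_self]
    · intro π hπ
      rw [hterm, hterm, mulsymm, mulsymm, Equiv.swap_apply_left, Equiv.swap_apply_right]
    -- outside finsets
  set O : Finset X := Finset.univ.filter (fun w => Out w) with hO
  set O' : Finset X := Finset.univ.filter (fun w => w ≠ a ∧ w ≠ b ∧ w ≠ c') with hO'
  have hOcard : (O.card : ℝ) = (n:ℝ) - 3 := by
    have hOeq : O = ({x, y, z} : Finset X)ᶜ := by
      ext w
      simp [hO, hOut, Finset.mem_compl, not_or]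
    have h3 : ({x,y,z} : Finset X).card = 3 := by
      rw [Finset.card_insert_of_notMem (by simp [hxy, hxz]),
        Finset.card_insert_of_notMem (by simp [hyz]), Finset.card_singleton]
    rw [hOeq, Finset.card_compl, h3, ← hn, Nat.cast_sub hcard]
    norm_num
  -- constancy in the outside argument
  have hABconst : ∀ (u : X), (u = x ∨ u = y ∨ u = z) → ∀ v v' : X, Out v → Out v' →
      S u v = S u v' := by
    intro u hu v v' hv hv'
    have hunv : ∀ π : Equiv.Perm X, π.symm u ≠ π.symm v := by
      intro π h
      have : u = v := π.symm.injective h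
      rcases hu with rfl|rfl|rfl
      · exact hv.1 this.symm
      · exact hv.2.1 this.symm
      · exact hv.2.2 this.symm
    have hunv' : ∀ π : Equiv.Perm X, π.symm u ≠ π.symm v' := by
      intro π h
      have : u = v' := π.symm.injective h
      rcases hu with rfl|rfl|rfl
      · exact hv'.1 this.symm
      · exact hv'.2.1 this.symm
      · exact hv'.2.2 this.symm
    simp only [hSdef]
    refine Finset.sum_nbij' (fun π => π * Equiv.swap (π.symm v) (π.symm v'))
      (fun π => π * Equiv.swap (π.symm v) (π.symm v'))
      (fun π hπ => hswapmem π hπ v v' hv hv') (fun π hπ => hswapmem π hπ v v' hv hv') ?_ ?_ ?_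
    · intro π hπ
      rw [mulsymm, mulsymm, Equiv.swap_apply_left, Equiv.swap_apply_right,
        Equiv.swap_comm ((Equiv.symm π) v') ((Equiv.symm π) v), Equiv.mul_swap_mul_self]
    · intro π hπ
      rw [mulsymm, mulsymm, Equiv.swap_apply_left, Equiv.swap_apply_right,
        Equiv.swap_comm ((Equiv.symm π) v') ((Equiv.symm π) v), Equiv.mul_swap_mul_self]
    · intro π hπ
      rw [hterm, hterm, mulsymm, mulsymm, Equiv.swap_apply_right,
        Equiv.swap_apply_of_ne_of_ne (hunv π) (hunv' π)]
  -- summing over the outside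
  have hABsum : ∀ (u q : X), (∀ π ∈ P, π.symm u = q) →
      ∑ v ∈ O, S u v = (P.card : ℝ) * ((O'.filter (fun w => c q w)).card : ℝ) := by
    intro u q hq
    simp only [hSdef]
    rw [Finset.sum_comm]
    have hinner : ∀ π ∈ P, ∑ v ∈ O, tOf (permAct π c) u v
        = ((O'.filter (fun w => c q w)).card : ℝ) := by
      intro π hπ
      have h1 : ∀ v ∈ O, tOf (permAct π c) u v = tOf c q (π.symm v) := by
        intro v hv; rw [hterm, hq π hπ]
      rw [Finset.sum_congr rfl h1]
      have h2 : ∑ v ∈ O, tOf c q (π.symm v) = ∑ w ∈ O', tOf c q w := by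
        refine Finset.sum_nbij' (fun v => π.symm v) (fun w => π w) ?_ ?_ ?_ ?_ ?_
        · intro v hv
          have hv' : Out v := (Finset.mem_filter.mp hv).2
          obtain ⟨ha1, ha2, ha3⟩ := hOutne v hv' π hπ
          simp only [hO', Finset.mem_filter, Finset.mem_univ, true_and]
          exact ⟨ha1, ha2, ha3⟩
        · intro w hw
          obtain ⟨hw1, hw2, hw3⟩ := (Finset.mem_filter.mp hw).2
          simp only [hO, Finset.mem_filter, Finset.mem_univ, true_and]
          refine ⟨?_, ?_, ?_⟩
          · intro h; exact hw1 (π.injective (h.symm ▸ (hmem π hπ).1.symm : π w = π a))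
          · intro h; exact hw2 (π.injective (h.symm ▸ (hmem π hπ).2.1.symm : π w = π b))
          · intro h; exact hw3 (π.injective (h.symm ▸ (hmem π hπ).2.2.symm : π w = π c'))
        · intro v _; exact π.apply_symm_apply v
        · intro w _; exact π.symm_apply_apply w
        · intro v _; rfl
      rw [h2]
      have h3 : ∀ w : X, tOf c q w = if c q w then (1:ℝ) else 0 := fun w => rfl
      rw [Finset.sum_congr rfl (fun w _ => h3 w), Finset.sum_boole]
    rw [Finset.sum_congr rfl hinner, Finset.sum_const, nsmul_eq_mul]
  -- the count is (n-3)/2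
  have hcnt : ∀ q r s : X, ({q,r,s} : Set X) = {a,b,c'} → c q r → ¬ c q s →
      ((O'.filter (fun w => c q w)).card : ℝ) = ((n:ℝ)-3)/2 := by
    intro q r s h3 hqr hqs
    have hsetq : {w | c q w} = insert r {w | w ≠ a ∧ w ≠ b ∧ w ≠ c' ∧ c q w} := by
      ext w
      simp only [Set.mem_setOf_eq, Set.mem_insert_iff]
      constructor
      · intro hw
        by_cases hwr : w = r
        · exact Or.inl hwr
        · right
          have hwq : w ≠ q := fun h => hirr q (h ▸ hw)
          have hws : w ≠ s := fun h => hqs (h ▸ hw)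
          have hmem3 : w ∉ ({a,b,c'} : Set X) := by
            rw [← h3]
            simp only [Set.mem_insert_iff, Set.mem_singleton_iff]
            push_neg
            exact ⟨hwq, hwr, hws⟩
          simp only [Set.mem_insert_iff, Set.mem_singleton_iff] at hmem3
          push_neg at hmem3
          exact ⟨hmem3.1, hmem3.2.1, hmem3.2.2, hw⟩
      · rintro (rfl | ⟨_,_,_,hw⟩)
        · exact hqr
        · exact hw
    have hr3 : r ∈ ({a,b,c'} : Set X) := by
      rw [← h3]; simp
    have hrnot : r ∉ {w : X | w ≠ a ∧ w ≠ b ∧ w ≠ c' ∧ c q w} := by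
      intro hw
      simp only [Set.mem_insert_iff, Set.mem_singleton_iff] at hr3
      rcases hr3 with rfl|rfl|rfl
      · exact hw.1 rfl
      · exact hw.2.1 rfl
      · exact hw.2.2.1 rfl
    have hins := Set.ncard_insert_of_notMem hrnot (Set.toFinite _)
    rw [← hsetq] at hins
    have hbq : ({w : X | c q w}.ncard : ℝ) = ((n:ℝ) - 1) / 2 := hbalc q
    have hfs : ((O'.filter (fun w => c q w) : Finset X) : Set X)
        = {w : X | w ≠ a ∧ w ≠ b ∧ w ≠ c' ∧ c q w} := by
      ext w
      simp only [hO', Finset.coe_filter, Finset.mem_filter, Finset.mem_univ, true_and,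
        Set.mem_setOf_eq]
      tauto
    have hfc : (O'.filter (fun w => c q w)).card
        = {w : X | w ≠ a ∧ w ≠ b ∧ w ≠ c' ∧ c q w}.ncard := by
      rw [← hfs, Set.ncard_coe_finset]
    have hcast : ({w : X | c q w}.ncard : ℝ)
        = ((O'.filter (fun w => c q w)).card : ℝ) + 1 := by
      rw [hfc]; exact_mod_cast congrArg (Nat.cast : ℕ → ℝ) hins
    rw [hcast] at hbq
    linarith
  have hcntA := hcnt a b c' rfl hab hnac
  have hcntB := hcnt b c' a (by ext w; simp only [Set.mem_insert_iff, Set.mem_singleton_iff]; tauto) hbc hnba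
  have hcntC := hcnt c' a b (by ext w; simp only [Set.mem_insert_iff, Set.mem_singleton_iff]; tauto) hca hncb
  -- the in/out case
  have hAB : ∀ (u q : X), (u = x ∨ u = y ∨ u = z) → (∀ π ∈ P, π.symm u = q) →
      (((O'.filter (fun w => c q w)).card : ℝ) = ((n:ℝ)-3)/2) →
      ∀ v : X, Out v → S u v = (P.card : ℝ) / 2 := by
    intro u q hu hq hcq v hv
    have hvO : v ∈ O := by
      simp only [hO, Finset.mem_filter, Finset.mem_univ, true_and]; exact hv
    have hsum1 : ∑ v' ∈ O, S u v' = (O.card : ℝ) * S u v := by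
      rw [Finset.sum_congr rfl (fun v' hv' =>
        hABconst u hu v' v (Finset.mem_filter.mp hv').2 hv), Finset.sum_const, nsmul_eq_mul]
    have hsum2 := hABsum u q hq
    rw [hsum1, hOcard, hcq] at hsum2
    have hOpos : (0:ℝ) < (n:ℝ) - 3 := by
      rw [← hOcard]
      exact_mod_cast Finset.card_pos.mpr ⟨v, hvO⟩
    have h2 : ((n:ℝ)-3) * S u v = ((n:ℝ)-3) * ((P.card:ℝ)/2) := by rw [hsum2]; ring
    exact mul_left_cancel₀ (ne_of_gt hOpos) h2
  -- the main computation
  have hmain : ∀ u v : X, S u v = (P.card : ℝ) * tTriple x y z u v := by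
    intro u v
    by_cases huv : u = v
    · subst huv
      have h0 : tTriple x y z u u = 0 := by simp [tTriple]
      rw [h0, mul_zero]
      simp only [hSdef]
      exact Finset.sum_eq_zero (fun π hπ => htOf0 _ _ _ (fun h => hirr _ h))
    by_cases h1 : (u,v) = (x,y) ∨ (u,v) = (y,z) ∨ (u,v) = (z,x)
    · have ht1 : tTriple x y z u v = 1 := by
        simp only [tTriple]
        rw [if_neg huv, if_pos h1]
      rw [ht1, mul_one]
      rcases h1 with h|h|h <;> (rw [Prod.mk.injEq] at h; obtain ⟨rfl, rfl⟩ := h)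
      · rw [hSconst _ _ a b hsymx hsymy, htOf1 c a b hab, mul_one]
      · rw [hSconst _ _ b c' hsymy hsymz, htOf1 c b c' hbc, mul_one]
      · rw [hSconst _ _ c' a hsymz hsymx, htOf1 c c' a hca, mul_one]
    by_cases h2 : (u,v) = (y,x) ∨ (u,v) = (z,y) ∨ (u,v) = (x,z)
    · have ht0 : tTriple x y z u v = 0 := by
        simp only [tTriple]
        rw [if_neg huv, if_neg h1, if_pos h2]
      rw [ht0, mul_zero]
      rcases h2 with h|h|h <;> (rw [Prod.mk.injEq] at h; obtain ⟨rfl, rfl⟩ := h)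
      · rw [hSconst _ _ b a hsymy hsymx, htOf0 c b a hnba, mul_zero]
      · rw [hSconst _ _ c' b hsymz hsymy, htOf0 c c' b hncb, mul_zero]
      · rw [hSconst _ _ a c' hsymx hsymz, htOf0 c a c' hnac, mul_zero]
    · have hthalf : tTriple x y z u v = 1/2 := by
        simp only [tTriple]
        rw [if_neg huv, if_neg h1, if_neg h2]
      rw [hthalf]
      have hOut_or_in : ∀ w : X, Out w ∨ (w = x ∨ w = y ∨ w = z) := by
        intro w
        by_cases h : Out w
        · exact Or.inl h
        · right
          simp only [hOut] at h
          push_neg at h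
          by_cases h1' : w = x
          · exact Or.inl h1'
          by_cases h2' : w = y
          · exact Or.inr (Or.inl h2')
          · exact Or.inr (Or.inr (h h1' h2'))
      have hnotboth : ¬ ((u = x ∨ u = y ∨ u = z) ∧ (v = x ∨ v = y ∨ v = z)) := by
        rintro ⟨hu', hv'⟩
        rcases hu' with rfl|rfl|rfl <;> rcases hv' with rfl|rfl|rfl
        · exact huv rfl
        · exact h1 (Or.inl rfl)
        · exact h2 (Or.inr (Or.inr rfl))
        · exact h2 (Or.inl rfl)
        · exact huv rfl
        · exact h1 (Or.inr (Or.inl rfl))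
        · exact h1 (Or.inr (Or.inr rfl))
        · exact h2 (Or.inr (Or.inl rfl))
        · exact huv rfl
      have hABall : ∀ (u' v' : X), (u' = x ∨ u' = y ∨ u' = z) → Out v' →
          S u' v' = (P.card : ℝ) / 2 := by
        intro u' v' hu' hv'
        rcases hu' with h|h|h
        · rw [h]; exact hAB x a (Or.inl rfl) hsymx hcntA v' hv'
        · rw [h]; exact hAB y b (Or.inr (Or.inl rfl)) hsymy hcntB v' hv'
        · rw [h]; exact hAB z c' (Or.inr (Or.inr rfl)) hsymz hcntC v' hv'
      rcases hOut_or_in u with hu' | hu'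
      · rcases hOut_or_in v with hv' | hv'
        · have h4 := hBB u v hu' hv'
          have h5 := hpair u v huv
          linarith
        · have h5 := hpair v u (Ne.symm huv)
          have h6 := hABall v u hv' hu'
          linarith
      · have h6 := hABall u v hu' (by
          rcases hOut_or_in v with hv' | hv'
          · exact hv'
          · exact absurd ⟨hu', hv'⟩ hnotboth)
        linarith
  -- conclusion
  have hzmem : ∀ π ∈ P, tOf (permAct π c) ∈ tOf '' D :=
    fun π _ => ⟨permAct π c, hsym π c hcD, rfl⟩
  have hw1 : ∑ _π ∈ P, (P.card : ℝ)⁻¹ = 1 := by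
    rw [Finset.sum_const, nsmul_eq_mul, mul_inv_cancel₀ (ne_of_gt hPpos)]
  have hconv := (convex_convexHull ℝ (tOf '' D)).sum_mem
    (t := P) (w := fun _ => (P.card : ℝ)⁻¹) (z := fun π => tOf (permAct π c))
    (fun _ _ => inv_nonneg.mpr hPpos.le) hw1
    (fun π hπ => subset_convexHull ℝ (tOf '' D) (hzmem π hπ))
  have heq : ∑ π ∈ P, (P.card : ℝ)⁻¹ • tOf (permAct π c) = tTriple x y z := by
    funext u v
    have happ : (∑ π ∈ P, (P.card : ℝ)⁻¹ • tOf (permAct π c)) u v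
        = ∑ π ∈ P, (P.card : ℝ)⁻¹ * tOf (permAct π c) u v := by
      simp [Finset.sum_apply]
    rw [happ, ← Finset.mul_sum]
    have hSuv : (∑ π ∈ P, tOf (permAct π c) u v) = S u v := rfl
    rw [hSuv, hmain u v, inv_mul_cancel_left₀ (ne_of_gt hPpos)]
  have hfinal : tTriple x y z ∈ convexHull ℝ (tOf '' D) := heq ▸ hconv
  exact hfinal
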